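/- Let G be a group, n ≥ 1, and N a normal subgroup of G contained in T_n(G). If G is a generalized n-Baer group (T_n(G) ≠ G), then so is G/N; more precisely T_n(G/N) ≤ T_n(G)/N. -/
import Mathlib


/-- A subgroup H is n-subnormal in G if there is a chain H = H₀ ⊴ H₁ ⊴ … ⊴ Hₙ = G. -/
def IsNSubnormal {G : Type*} [Group G] : ℕ → Subgroup G → Prop
  | 0, H => H = ⊤
  | n + 1, H => ∃ K : Subgroup G, H ≤ K ∧ (H.subgroupOf K).Normal ∧ IsNSubnormal n K

/-- T_n(G) is the subgroup generated by all elements whose cyclic subgroup is not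
n-subnormal in G. -/
def Tn (G : Type*) [Group G] (n : ℕ) : Subgroup G :=
  Subgroup.closure {x : G | ¬ IsNSubnormal n (Subgroup.zpowers x)}

lemma isNSubnormal_map {G G' : Type*} [Group G] [Group G'] (f : G →* G')
    (hf : Function.Surjective f) :
    ∀ n (H : Subgroup G), IsNSubnormal n H → IsNSubnormal n (H.map f) := by
  intro n
  induction n with
  | zero =>
    intro H h
    simp only [IsNSubnormal] at h ⊢
    subst h
    exact Subgroup.map_top_of_surjective f hf
  | succ n ih =>
    rintro H ⟨K, hHK, hnorm, hK⟩
    refine ⟨K.map f, Subgroup.map_mono hHK, ⟨?_⟩, ih K hK⟩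
    rintro ⟨a, haK⟩ ha ⟨b, hbK⟩
    rw [Subgroup.mem_subgroupOf] at ha ⊢
    simp only at ha ⊢
    obtain ⟨h, hh, rfl⟩ := ha
    obtain ⟨k, hk, rfl⟩ := hbK
    refine ⟨k * h * k⁻¹, ?_, by simp [map_mul]⟩
    have := hnorm.conj_mem ⟨h, hHK hh⟩ (by simpa [Subgroup.mem_subgroupOf] using hh) ⟨k, hk⟩
    simpa [Subgroup.mem_subgroupOf] using this

/-- If N ⊴ G with N ≤ T_n(G), then T_n(G/N) ≤ T_n(G)/N; in particular
if G is a generalized n-Baer group (T_n(G) ≠ G), then so is G/N. -/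
theorem stmt_7 {G : Type*} [Group G] (n : ℕ) (hn : 1 ≤ n) (N : Subgroup G)
    [N.Normal] (hN : N ≤ Tn G n) :
    Tn (G ⧸ N) n ≤ (Tn G n).map (QuotientGroup.mk' N) ∧
    (Tn G n ≠ ⊤ → Tn (G ⧸ N) n ≠ ⊤) := by
  have hsurj : Function.Surjective (QuotientGroup.mk' N) := QuotientGroup.mk'_surjective N
  have key : Tn (G ⧸ N) n ≤ (Tn G n).map (QuotientGroup.mk' N) := by
    rw [Tn, Subgroup.closure_le]
    rintro x hx
    obtain ⟨g, rfl⟩ := hsurj x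
    simp only [Set.mem_setOf_eq] at hx
    have hg : g ∈ Tn G n := by
      apply Subgroup.subset_closure
      simp only [Set.mem_setOf_eq]
      intro hsub
      apply hx
      have := isNSubnormal_map (QuotientGroup.mk' N) hsurj n _ hsub
      rwa [MonoidHom.map_zpowers] at this
    exact ⟨g, hg, rfl⟩
  refine ⟨key, fun hne htop => hne ?_⟩
  have : (Tn G n).map (QuotientGroup.mk' N) = ⊤ := top_le_iff.mp (htop ▸ key)
  have h2 := congrArg (Subgroup.comap (QuotientGroup.mk' N)) this
  rw [Subgroup.comap_map_eq, QuotientGroup.ker_mk', Subgroup.comap_top,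
    sup_eq_left.mpr hN] at h2
  exact h2
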